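/- The matrix ρ_t is positive semidefinite if and only if the point (t₁₁,t₂₂,t₃₃) lies in the tetrahedron 𝒯 with vertices (−1,−1,−1), (−1,1,1), (1,−1,1), (1,1,−1), i.e. iff 1−t₁₁−t₂₂−t₃₃ ≥ 0, 1−t₁₁+t₂₂+t₃₃ ≥ 0, 1+t₁₁−t₂₂+t₃₃ ≥ 0, and 1+t₁₁+t₂₂−t₃₃ ≥ 0. -/

import Mathlib

noncomputable def rhoT (a b c : ℝ) : Matrix (Fin 4) (Fin 4) ℝ :=
  !![(1 + c)/4, 0, 0, (a - b)/4;
     0, (1 - c)/4, (a + b)/4, 0;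
     0, (a + b)/4, (1 - c)/4, 0;
     (a - b)/4, 0, 0, (1 + c)/4]

/-- `ρ_t` is positive semidefinite iff `t` lies in the tetrahedron `𝒯`. -/
theorem rhoT_posSemidef_iff_mem_tetrahedron (a b c : ℝ) :
    (rhoT a b c).PosSemidef ↔
      (0 ≤ 1 - a - b - c ∧ 0 ≤ 1 - a + b + c ∧ 0 ≤ 1 + a - b + c ∧ 0 ≤ 1 + a + b - c) := by
  constructor
  · intro h
    have h1 := h.dotProduct_mulVec_nonneg ![0, 1, -1, 0]
    have h2 := h.dotProduct_mulVec_nonneg ![1, 0, 0, -1]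
    have h3 := h.dotProduct_mulVec_nonneg ![1, 0, 0, 1]
    have h4 := h.dotProduct_mulVec_nonneg ![0, 1, 1, 0]
    simp [rhoT, dotProduct, Matrix.mulVec, Fin.sum_univ_four] at h1 h2 h3 h4
    refine ⟨by linarith, by linarith, by linarith, by linarith⟩
  · rintro ⟨h1, h2, h3, h4⟩
    rw [Matrix.posSemidef_iff_dotProduct_mulVec]
    constructor
    · ext i j
      fin_cases i <;> fin_cases j <;>
        simp [rhoT, Matrix.conjTranspose_apply]
    · intro x
      have key : dotProduct (star x) ((rhoT a b c).mulVec x) =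
          ((1 - a + b + c) * (x 0 - x 3)^2 + (1 + a - b + c) * (x 0 + x 3)^2 +
           (1 - a - b - c) * (x 1 - x 2)^2 + (1 + a + b - c) * (x 1 + x 2)^2) / 8 := by
        simp [rhoT, dotProduct, Matrix.mulVec, Fin.sum_univ_four]
        ring
      rw [key]
      positivity
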